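/- arXiv:2212.07587 — 2 statements merged into one kernel-verified Lean document; each statement's English description precedes it below -/
import Mathlib

section
/- (Key lemma for the dual updates.) Let Y ⊆ ℝ^m be nonempty closed convex, g : ℝ^m → (−∞,∞] proper closed convex, A a real m×n matrix, γ > 0, and y^k ∈ ℝ^m. Let φ : ℝ^m → ℝ be a differentiable ϱ-strongly convex kernel (ϱ > 0), and let a differentiable ϱ-strongly convex kernel on ℝ^n (also denoted φ) be given. For u, w ∈ ℝ^n, let ȳ_u be a minimizer over Y of y ↦ g(y) − ⟨Au, y⟩ + γφ(y) − γ⟨∇φ(y^k), y − y^k⟩ and ȳ_w a minimizer of the same function with u replaced by w. Then for every y ∈ Y and every α > 0: g(ȳ_u) − g(y) + ⟨ȳ_u − y, −Aw⟩ ≤ γ B_φ(y, y^k) − γ B_φ(y, ȳ_w) − γ B_φ(ȳ_u, y^k) + (α‖AᵀA‖/ϱ) B_φ(w, u) − (γ − 1/(αϱ)) B_φ(ȳ_w, ȳ_u), where ‖AᵀA‖ is the spectral norm of AᵀA. -/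
noncomputable section
open scoped RealInnerProductSpace
open Filter

abbrev Euc (d : ℕ) : Type := EuclideanSpace ℝ (Fin d)

/-- Bregman distance associated with kernel `φ` whose gradient map is `φ'`. -/
def Breg {d : ℕ} (φ : Euc d → ℝ) (φ' : Euc d → Euc d) (x y : Euc d) : ℝ :=
  φ x - φ y - ⟪φ' y, x - y⟫

open scoped Topology

/-- directional derivative as limit of difference quotients from the right -/
lemma dir_tendsto {d : ℕ} {φ : Euc d → ℝ} {φ' : Euc d → Euc d}
    (hφ : ∀ z, HasGradientAt φ (φ' z) z) (x v : Euc d) :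
    Tendsto (fun t : ℝ => (φ (x + t • v) - φ x) / t) (𝓝[>] 0) (𝓝 ⟪φ' x, v⟫) := by
  have hc : HasDerivAt (fun t : ℝ => x + t • v) v 0 := by
    simpa using ((hasDerivAt_id (0:ℝ)).smul_const v).const_add x
  have hF : HasFDerivAt φ (InnerProductSpace.toDual ℝ _ (φ' x)) x := (hφ x).hasFDerivAt
  have hcomp : HasDerivAt (fun t : ℝ => φ (x + t • v)) ⟪φ' x, v⟫ 0 := by
    have hF0 : HasFDerivAt φ (InnerProductSpace.toDual ℝ _ (φ' x)) (x + (0:ℝ) • v) := by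
      simpa using hF
    have := HasFDerivAt.comp_hasDerivAt (f := fun t : ℝ => x + t • v) (0:ℝ) hF0 hc
    exact this
  have := hasDerivAt_iff_tendsto_slope.mp hcomp
  have h2 : Tendsto (slope (fun t : ℝ => φ (x + t • v)) 0) (𝓝[>] 0) (𝓝 ⟪φ' x, v⟫) :=
    this.mono_left (nhdsWithin_mono _ (fun t ht => ne_of_gt ht))
  refine h2.congr' ?_
  filter_upwards [self_mem_nhdsWithin] with t ht
  simp [slope, Set.mem_Ioi.mp ht |>.ne', div_eq_inv_mul]

/-- gradient inequality for a convex differentiable function -/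
lemma convex_grad_ineq {d : ℕ} {ψ : Euc d → ℝ} {ψ' : Euc d → Euc d}
    (hψ : ConvexOn ℝ Set.univ ψ) (hg : ∀ z, HasGradientAt ψ (ψ' z) z) (x y : Euc d) :
    ⟪ψ' y, x - y⟫ ≤ ψ x - ψ y := by
  have htend := dir_tendsto hg y (x - y)
  refine le_of_tendsto htend ?_
  filter_upwards [Ioo_mem_nhdsGT_of_mem (Set.left_mem_Ico.mpr one_pos)] with t ht
  obtain ⟨ht0, ht1⟩ := ht
  have hmem : y + t • (x - y) = (1 - t) • y + t • x := by
    simp [smul_sub, sub_smul]; abel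
  have hcv : ψ (t • x + (1 - t) • y) ≤ t * ψ x + (1 - t) * ψ y :=
    hψ.2 (Set.mem_univ x) (Set.mem_univ y) ht0.le (by linarith) (by ring)
  rw [div_le_iff₀ ht0]
  have h3 : ψ (y + t • (x - y)) ≤ t * ψ x + (1 - t) * ψ y := by
    rw [hmem, add_comm]; exact hcv
  nlinarith [h3]

open InnerProductSpace in
lemma grad_sub_sq {d : ℕ} {φ : Euc d → ℝ} {φ' : Euc d → Euc d} (ϱ : ℝ)
    (hφ : ∀ z, HasGradientAt φ (φ' z) z) (z : Euc d) :
    HasGradientAt (fun z => φ z - ϱ / 2 * ‖z‖ ^ 2) (φ' z - (ϱ • z)) z := by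
  rw [hasGradientAt_iff_hasFDerivAt]
  have h1 : HasFDerivAt (fun z : Euc d => ‖z‖ ^ 2) (2 • (innerSL ℝ z)) z :=
    (hasFDerivAt_id z).norm_sq
  have h2 := (hφ z).hasFDerivAt.sub (h1.const_smul (ϱ / 2))
  have : HasFDerivAt (fun z : Euc d => φ z - ϱ / 2 * ‖z‖ ^ 2)
      ((toDual ℝ (Euc d)) (φ' z) - (ϱ / 2) • (2 • (innerSL ℝ z))) z := by
    exact h2
  refine this.congr_fderiv ?_
  ext v
  simp [real_inner_smul_left, inner_sub_left, smul_smul]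
  ring

/-- strong convexity lower bound for the Bregman distance -/
lemma breg_lower {d : ℕ} {φ : Euc d → ℝ} {φ' : Euc d → Euc d} {ϱ : ℝ}
    (hφ : ∀ z, HasGradientAt φ (φ' z) z)
    (hsc : ConvexOn ℝ Set.univ (fun z => φ z - ϱ / 2 * ‖z‖ ^ 2)) (x y : Euc d) :
    ϱ / 2 * ‖x - y‖ ^ 2 ≤ φ x - φ y - ⟪φ' y, x - y⟫ := by
  have h := convex_grad_ineq hsc (fun z => grad_sub_sq ϱ hφ z) x y
  have hid : ⟪φ' y - ϱ • y, x - y⟫ = ⟪φ' y, x - y⟫ - ϱ * ⟪y, x - y⟫ := by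
    rw [inner_sub_left, real_inner_smul_left]
  have hexp : ‖x - y‖ ^ 2 = ‖x‖ ^ 2 - ‖y‖ ^ 2 - 2 * ⟪y, x - y⟫ := by
    rw [norm_sub_sq_real, inner_sub_right, real_inner_self_eq_norm_sq, real_inner_comm y x]
    ring
  rw [hid] at h
  have hq : ϱ / 2 * ‖x - y‖ ^ 2 = ϱ / 2 * ‖x‖ ^ 2 - ϱ / 2 * ‖y‖ ^ 2 - ϱ * ⟪y, x - y⟫ := by
    rw [hexp]; ring
  linarith [h, hq]

lemma three_point {m : ℕ} {Y : Set (Euc m)} (hYcv : Convex ℝ Y)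
    {f : Euc m → ℝ} (hf : ConvexOn ℝ Set.univ f) {γ : ℝ} (hγ : 0 < γ)
    {φ : Euc m → ℝ} {φ' : Euc m → Euc m} (hφ : ∀ z, HasGradientAt φ (φ' z) z)
    {yk xb : Euc m} (hxb : xb ∈ Y)
    (hmin : ∀ y ∈ Y, f xb + γ * φ xb - γ * ⟪φ' yk, xb - yk⟫ ≤
      f y + γ * φ y - γ * ⟪φ' yk, y - yk⟫) :
    ∀ y ∈ Y, f xb - f y ≤ γ * ⟪φ' xb - φ' yk, y - xb⟫ := by
  intro y hy
  set v := y - xb with hv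
  have htend : Tendsto (fun t : ℝ => γ * ((φ (xb + t • v) - φ xb) / t)) (𝓝[>] 0)
      (𝓝 (γ * ⟪φ' xb, v⟫)) := (dir_tendsto hφ xb v).const_mul γ
  have hkey : f xb - f y + γ * ⟪φ' yk, v⟫ ≤ γ * ⟪φ' xb, v⟫ := by
    refine ge_of_tendsto htend ?_
    filter_upwards [Ioo_mem_nhdsGT_of_mem (Set.left_mem_Ico.mpr one_pos)] with t ht
    obtain ⟨ht0, ht1⟩ := ht
    have hmem : xb + t • v ∈ Y := by
      have : xb + t • v = (1 - t) • xb + t • y := by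
        rw [hv]; simp [smul_sub, sub_smul]; abel
      rw [this]
      exact hYcv hxb hy (by linarith) ht0.le (by ring)
    have h1 := hmin _ hmem
    have h2 : f (xb + t • v) ≤ (1 - t) * f xb + t * f y := by
      have : xb + t • v = (1 - t) • xb + t • y := by
        rw [hv]; simp [smul_sub, sub_smul]; abel
      rw [this]
      exact hf.2 (Set.mem_univ xb) (Set.mem_univ y) (by linarith) ht0.le (by ring)
    have h3 : ⟪φ' yk, xb + t • v - yk⟫ = ⟪φ' yk, xb - yk⟫ + t * ⟪φ' yk, v⟫ := by
      have : xb + t • v - yk = (xb - yk) + t • v := by abel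
      rw [this, inner_add_right, real_inner_smul_right]
    rw [h3] at h1
    have hq : γ * ((φ (xb + t • v) - φ xb) / t) = (γ * φ (xb + t • v) - γ * φ xb) / t := by
      ring
    rw [hq, le_div_iff₀ ht0]
    nlinarith [h1, h2, hγ.le, ht0.le]
  have : ⟪φ' xb - φ' yk, v⟫ = ⟪φ' xb, v⟫ - ⟪φ' yk, v⟫ := inner_sub_left _ _ _
  rw [this]
  linarith [hkey]

lemma convexOn_neg_inner {d : ℕ} (a : Euc d) :
    ConvexOn ℝ Set.univ (fun z : Euc d => -⟪a, z⟫) := by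
  refine ⟨convex_univ, ?_⟩
  intro x _ y _ p q hp hq hpq
  simp only [smul_eq_mul]
  rw [inner_add_right, real_inner_smul_right, real_inner_smul_right]
  exact le_of_eq (by ring)

lemma breg_three {d : ℕ} (φ : Euc d → ℝ) (φ' : Euc d → Euc d) (a b c : Euc d) :
    ⟪φ' b - φ' c, a - b⟫ = Breg φ φ' a c - Breg φ φ' a b - Breg φ φ' b c := by
  simp only [Breg, inner_sub_left, inner_sub_right]
  ring

lemma spec_bound {n m : ℕ} (A : Euc n →L[ℝ] Euc m) (x : Euc n) :
    ‖A x‖ ^ 2 ≤ ‖(ContinuousLinearMap.adjoint A).comp A‖ * ‖x‖ ^ 2 := by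
  have h1 : ⟪((ContinuousLinearMap.adjoint A).comp A) x, x⟫ = ‖A x‖ ^ 2 := by
    rw [ContinuousLinearMap.comp_apply, ContinuousLinearMap.adjoint_inner_left,
      real_inner_self_eq_norm_sq]
  have h2 : ⟪((ContinuousLinearMap.adjoint A).comp A) x, x⟫ ≤
      ‖((ContinuousLinearMap.adjoint A).comp A) x‖ * ‖x‖ := real_inner_le_norm _ _
  have h3 : ‖((ContinuousLinearMap.adjoint A).comp A) x‖ ≤
      ‖(ContinuousLinearMap.adjoint A).comp A‖ * ‖x‖ := ContinuousLinearMap.le_opNorm _ _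
  nlinarith [norm_nonneg x, norm_nonneg (((ContinuousLinearMap.adjoint A).comp A) x)]

/-- key lemma for the dual updates of SPIDA. -/
theorem dual_update_key_lemma {n m : ℕ}
    (Y : Set (Euc m)) (hYne : Y.Nonempty) (hYcl : IsClosed Y) (hYcv : Convex ℝ Y)
    (g : Euc m → ℝ) (hg : ConvexOn ℝ Set.univ g) (hglsc : LowerSemicontinuous g)
    (A : Euc n →L[ℝ] Euc m) (γ : ℝ) (hγ : 0 < γ) (yk : Euc m)
    (φ : Euc m → ℝ) (φ' : Euc m → Euc m) (ϱ : ℝ) (hϱ : 0 < ϱ)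
    (hφg : ∀ z, HasGradientAt φ (φ' z) z)
    (hφsc : ConvexOn ℝ Set.univ (fun z => φ z - ϱ / 2 * ‖z‖ ^ 2))
    (φn : Euc n → ℝ) (φn' : Euc n → Euc n)
    (hφng : ∀ z, HasGradientAt φn (φn' z) z)
    (hφnsc : ConvexOn ℝ Set.univ (fun z => φn z - ϱ / 2 * ‖z‖ ^ 2))
    (u w : Euc n) (yu yw : Euc m)
    (hyu_mem : yu ∈ Y)
    (hyu_min : ∀ y ∈ Y,
      g yu - ⟪A u, yu⟫ + γ * φ yu - γ * ⟪φ' yk, yu - yk⟫ ≤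
        g y - ⟪A u, y⟫ + γ * φ y - γ * ⟪φ' yk, y - yk⟫)
    (hyw_mem : yw ∈ Y)
    (hyw_min : ∀ y ∈ Y,
      g yw - ⟪A w, yw⟫ + γ * φ yw - γ * ⟪φ' yk, yw - yk⟫ ≤
        g y - ⟪A w, y⟫ + γ * φ y - γ * ⟪φ' yk, y - yk⟫) :
    ∀ y ∈ Y, ∀ α : ℝ, 0 < α →
      g yu - g y + ⟪yu - y, -(A w)⟫ ≤
        γ * Breg φ φ' y yk - γ * Breg φ φ' y yw - γ * Breg φ φ' yu yk
          + α * ‖(ContinuousLinearMap.adjoint A).comp A‖ / ϱ * Breg φn φn' w u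
          - (γ - 1 / (α * ϱ)) * Breg φ φ' yw yu := by
  intro y hy α hα
  -- convexity of f_u, f_w
  have hfu : ConvexOn ℝ Set.univ (fun z : Euc m => g z - ⟪A u, z⟫) := by
    exact hg.add (convexOn_neg_inner (A u))
  have hfw : ConvexOn ℝ Set.univ (fun z : Euc m => g z - ⟪A w, z⟫) := by
    exact hg.add (convexOn_neg_inner (A w))
  -- three-point inequalities
  have T1 := three_point hYcv hfu hγ hφg hyu_mem (fun z hz => hyu_min z hz) yw hyw_mem
  have T2 := three_point hYcv hfw hγ hφg hyw_mem (fun z hz => hyw_min z hz) y hy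
  rw [breg_three φ φ' yw yu yk] at T1
  rw [breg_three φ φ' y yw yk] at T2
  -- Young's inequality
  set N := ‖(ContinuousLinearMap.adjoint A).comp A‖ with hN
  have hN0 : 0 ≤ N := norm_nonneg _
  have hAuw : ⟪A u - A w, yu - yw⟫ ≤ α / 2 * ‖A (u - w)‖ ^ 2 + 1 / (2 * α) * ‖yu - yw‖ ^ 2 := by
    have h1 : ⟪A u - A w, yu - yw⟫ ≤ ‖A (u - w)‖ * ‖yu - yw‖ := by
      rw [← map_sub]
      exact real_inner_le_norm _ _
    have h2 : ‖A (u - w)‖ * ‖yu - yw‖ ≤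
        α / 2 * ‖A (u - w)‖ ^ 2 + 1 / (2 * α) * ‖yu - yw‖ ^ 2 := by
      rw [← sub_nonneg]
      have h3 : α / 2 * ‖A (u - w)‖ ^ 2 + 1 / (2 * α) * ‖yu - yw‖ ^ 2 -
          ‖A (u - w)‖ * ‖yu - yw‖ = (α * ‖A (u - w)‖ - ‖yu - yw‖) ^ 2 / (2 * α) := by
        field_simp; ring
      rw [h3]; positivity
    linarith [h1, h2]
  have hspec := spec_bound A (u - w)
  -- strong convexity bounds
  have S1 : ϱ / 2 * ‖w - u‖ ^ 2 ≤ Breg φn φn' w u := breg_lower hφng hφnsc w u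
  have S2 : ϱ / 2 * ‖yw - yu‖ ^ 2 ≤ Breg φ φ' yw yu := breg_lower hφg hφsc yw yu
  rw [norm_sub_rev] at S1
  rw [norm_sub_rev] at S2
  -- products
  have P1 : α / 2 * (N * ‖u - w‖ ^ 2) ≤ α * N / ϱ * Breg φn φn' w u := by
    have := mul_le_mul_of_nonneg_left S1 (by positivity : (0:ℝ) ≤ α * N / ϱ)
    calc α / 2 * (N * ‖u - w‖ ^ 2) = α * N / ϱ * (ϱ / 2 * ‖u - w‖ ^ 2) := by
          field_simp
      _ ≤ α * N / ϱ * Breg φn φn' w u := this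
  have P2 : 1 / (2 * α) * ‖yu - yw‖ ^ 2 ≤ 1 / (α * ϱ) * Breg φ φ' yw yu := by
    have := mul_le_mul_of_nonneg_left S2 (by positivity : (0:ℝ) ≤ 1 / (α * ϱ))
    calc 1 / (2 * α) * ‖yu - yw‖ ^ 2 = 1 / (α * ϱ) * (ϱ / 2 * ‖yu - yw‖ ^ 2) := by
          field_simp
      _ ≤ 1 / (α * ϱ) * Breg φ φ' yw yu := this
  -- inner product expansions
  have e1 : ⟪yu - y, -(A w)⟫ = -(⟪A w, yu⟫ - ⟪A w, y⟫) := by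
    rw [inner_neg_right, inner_sub_left, real_inner_comm yu, real_inner_comm y]
  have e2 : ⟪A u - A w, yu - yw⟫ =
      (⟪A u, yu⟫ - ⟪A u, yw⟫) - (⟪A w, yu⟫ - ⟪A w, yw⟫) := by
    rw [inner_sub_left, inner_sub_right, inner_sub_right]
  have e3 : ⟪A w, yw - y⟫ = ⟪A w, yw⟫ - ⟪A w, y⟫ := inner_sub_right _ _ _
  rw [e2] at hAuw
  rw [e1]
  -- final linear combination
  have hα2 : (0:ℝ) < α / 2 := by positivity
  have hspec' : α / 2 * ‖A (u - w)‖ ^ 2 ≤ α / 2 * (N * ‖u - w‖ ^ 2) :=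
    mul_le_mul_of_nonneg_left hspec hα2.le
  have hinner_w : ⟪yw - y, A w⟫ = ⟪A w, yw⟫ - ⟪A w, y⟫ := by
    rw [inner_sub_left, real_inner_comm yw, real_inner_comm y]
  have T1' : g yu - ⟪A u, yu⟫ - (g yw - ⟪A u, yw⟫) ≤
      γ * Breg φ φ' yw yk - γ * Breg φ φ' yw yu - γ * Breg φ φ' yu yk :=
    le_of_le_of_eq T1 (by ring)
  have T2' : g yw - ⟪A w, yw⟫ - (g y - ⟪A w, y⟫) ≤
      γ * Breg φ φ' y yk - γ * Breg φ φ' y yw - γ * Breg φ φ' yw yk :=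
    le_of_le_of_eq T2 (by ring)
  have egoal : γ * Breg φ φ' y yk - γ * Breg φ φ' y yw - γ * Breg φ φ' yu yk
      + α * N / ϱ * Breg φn φn' w u - (γ - 1 / (α * ϱ)) * Breg φ φ' yw yu
      = (γ * Breg φ φ' y yk - γ * Breg φ φ' y yw - γ * Breg φ φ' yw yk)
        + (γ * Breg φ φ' yw yk - γ * Breg φ φ' yw yu - γ * Breg φ φ' yu yk)
        + α * N / ϱ * Breg φn φn' w u + 1 / (α * ϱ) * Breg φ φ' yw yu := by ring
  rw [egoal]
  linarith [T1', T2', hAuw, hspec', P1, P2]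
end
end

section
/- (Fejér monotonicity.) Under the standing assumption, let (x^{k+1}, ỹ^{k+1}, y^{k+1}) be produced by one SPIDA iteration from (x^k, y^k), and let (x*, y*) be a saddle point of L. Then 0 ≤ γ B_φ(y*, y^{k+1}) + μ B_ψ(x*, x^{k+1}) ≤ γ B_φ(y*, y^k) + μ B_ψ(x*, x^k); in particular, along the SPIDA sequence the quantity γ B_φ(y*, y^k) + μ B_ψ(x*, x^k) is nonincreasing in k. -/
noncomputable section
open scoped RealInnerProductSpace
open Filter

/-- The convex-concave Lagrangian `L(x,y) = f(x) + ⟨Ax, y⟩ − g(y)`. -/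
def Lag {n m : ℕ} (f : Euc n → ℝ) (g : Euc m → ℝ) (A : Euc n →L[ℝ] Euc m)
    (x : Euc n) (y : Euc m) : ℝ := f x + ⟪A x, y⟫ - g y


lemma hasDerivAt_line {d : ℕ} {φ : Euc d → ℝ} {g : Euc d} (y v : Euc d)
    (h : HasGradientAt φ g y) :
    HasDerivAt (fun t : ℝ => φ (y + t • v)) (⟪g, v⟫) 0 := by
  have hline : HasDerivAt (fun t : ℝ => y + t • v) v 0 := by
    simpa using ((hasDerivAt_id (0 : ℝ)).smul_const v).const_add y
  have hF : HasFDerivAt φ (InnerProductSpace.toDual ℝ (Euc d) g) (y + (0 : ℝ) • v) := by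
    simpa using h.hasFDerivAt
  simpa [InnerProductSpace.toDual_apply_apply, Function.comp_def] using hF.comp_hasDerivAt 0 hline

lemma slope_le_of_deriv {q : ℝ → ℝ} {dv c : ℝ} (hq : HasDerivAt q dv 0) (h0 : q 0 = 0)
    (h : ∀ t : ℝ, t ∈ Set.Ioc (0 : ℝ) 1 → c * t ≤ q t) : c ≤ dv := by
  have hs : Tendsto (fun t => q t / t) (nhdsWithin 0 (Set.Ioi 0)) (nhds dv) := by
    have := hasDerivAt_iff_tendsto_slope.mp hq
    have h2 : Tendsto (slope q 0) (nhdsWithin 0 (Set.Ioi 0)) (nhds dv) :=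
      this.mono_left (nhdsWithin_mono _ (fun x hx => ne_of_gt hx))
    refine h2.congr (fun t => ?_)
    simp [slope_def_field, h0, div_eq_mul_inv, mul_comm]
  refine ge_of_tendsto hs ?_
  filter_upwards [Ioc_mem_nhdsGT_of_mem (by norm_num : (0:ℝ) ∈ Set.Ico (0:ℝ) 1)] with t ht
  have ht0 : 0 < t := ht.1
  rw [le_div_iff₀ ht0]
  exact h t ht

lemma deriv_le_of_slope {q : ℝ → ℝ} {dv c : ℝ} (hq : HasDerivAt q dv 0) (h0 : q 0 = 0)
    (h : ∀ t : ℝ, t ∈ Set.Ioc (0 : ℝ) 1 → q t ≤ c * t) : dv ≤ c := by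
  have := slope_le_of_deriv (c := -c) (hq.neg) (by simp [h0])
    (fun t ht => by have := h t ht; simp only [Pi.neg_apply]; linarith)
  linarith

/-- strong convexity gradient inequality (c = 0 gives the plain convex case). -/
lemma strong_grad_ineq {d : ℕ} {φ : Euc d → ℝ} {φ' : Euc d → Euc d}
    (hg : ∀ z, HasGradientAt φ (φ' z) z) {c : ℝ}
    (hc : ConvexOn ℝ Set.univ (fun z => φ z - c * ‖z‖ ^ 2)) (x y : Euc d) :
    φ y + ⟪φ' y, x - y⟫ + c * ‖x - y‖ ^ 2 ≤ φ x := by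
  obtain ⟨v, hv⟩ : ∃ v : Euc d, v = x - y := ⟨_, rfl⟩
  set q : ℝ → ℝ := fun t => φ (y + t • v) - φ y - (c * (2 * ⟪y, v⟫)) * t - (c * ‖v‖ ^ 2) * (t * t)
    with hqdef
  have hq : HasDerivAt q (⟪φ' y, v⟫ - c * (2 * ⟪y, v⟫)) 0 := by
    have h1 := (hasDerivAt_line y v (hg y)).sub_const (φ y)
    have h2 : HasDerivAt (fun t : ℝ => (c * (2 * ⟪y, v⟫)) * t) (c * (2 * ⟪y, v⟫)) 0 := by
      simpa using (hasDerivAt_id (0:ℝ)).const_mul (c * (2 * ⟪y, v⟫))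
    have h3 : HasDerivAt (fun t : ℝ => (c * ‖v‖ ^ 2) * (t * t)) 0 0 := by
      simpa using ((hasDerivAt_id (0:ℝ)).mul (hasDerivAt_id (0:ℝ))).const_mul (c * ‖v‖ ^ 2)
    have hh := (h1.sub h2).sub h3
    rw [sub_zero] at hh
    exact hh
  have h0 : q 0 = 0 := by simp [hqdef]
  have hnorm : ∀ t : ℝ, ‖y + t • v‖ ^ 2 = ‖y‖ ^ 2 + 2 * t * ⟪y, v⟫ + t ^ 2 * ‖v‖ ^ 2 := by
    intro t
    have := norm_add_sq_real y (t • v)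
    rw [this, real_inner_smul_right, norm_smul]
    simp [mul_pow]
    ring
  have hslope : ∀ t : ℝ, t ∈ Set.Ioc (0:ℝ) 1 →
      q t ≤ ((φ x - c * ‖x‖ ^ 2) - (φ y - c * ‖y‖ ^ 2)) * t := by
    intro t ht
    have hcomb : y + t • v = (1 - t) • y + t • x := by
      rw [hv]; module
    have hcv := hc.2 (Set.mem_univ y) (Set.mem_univ x) (by linarith [ht.2] : (0:ℝ) ≤ 1 - t)
      (le_of_lt ht.1) (by ring)
    simp only [smul_eq_mul] at hcv
    rw [← hcomb] at hcv
    have hn := hnorm t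
    rw [hn] at hcv
    simp only [hqdef]
    linarith [hcv]
  have hkey : ⟪φ' y, v⟫ - c * (2 * ⟪y, v⟫) ≤
      (φ x - c * ‖x‖ ^ 2) - (φ y - c * ‖y‖ ^ 2) := deriv_le_of_slope hq h0 hslope
  have hxy : ‖x - y‖ ^ 2 = ‖x‖ ^ 2 - 2 * ⟪x, y⟫ + ‖y‖ ^ 2 := by
    have := norm_sub_sq_real x y; linarith
  have hyv : ⟪y, v⟫ = ⟪x, y⟫ - ‖y‖ ^ 2 := by
    rw [hv, inner_sub_right, real_inner_self_eq_norm_sq, real_inner_comm]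
  rw [show x - y = v from hv.symm]
  rw [show x - y = v from hv.symm] at hxy
  have hyv2 : c * ⟪y, v⟫ = c * ⟪x, y⟫ - c * ‖y‖ ^ 2 := by rw [hyv]; ring
  have hxy2 : c * ‖v‖ ^ 2 = c * ‖x‖ ^ 2 - 2 * (c * ⟪x, y⟫) + c * ‖y‖ ^ 2 := by
    rw [hxy]; ring
  linarith [hkey, hyv2, hxy2]

lemma breg_nonneg {d : ℕ} {φ : Euc d → ℝ} {φ' : Euc d → Euc d}
    (hg : ∀ z, HasGradientAt φ (φ' z) z) (hc : ConvexOn ℝ Set.univ φ) (x y : Euc d) :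
    0 ≤ Breg φ φ' x y := by
  have hc0 : ConvexOn ℝ Set.univ (fun z => φ z - 0 * ‖z‖ ^ 2) := by simpa using hc
  have := strong_grad_ineq hg hc0 x y
  simp only [Breg]; nlinarith

lemma breg_strong {d : ℕ} {φ : Euc d → ℝ} {φ' : Euc d → Euc d}
    (hg : ∀ z, HasGradientAt φ (φ' z) z) {c : ℝ}
    (hc : ConvexOn ℝ Set.univ (fun z => φ z - c * ‖z‖ ^ 2)) (x y : Euc d) :
    c * ‖x - y‖ ^ 2 ≤ Breg φ φ' x y := by
  have := strong_grad_ineq hg hc x y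
  simp only [Breg]; linarith

lemma convexOn_add_inner {d : ℕ} {g : Euc d → ℝ} (hg : ConvexOn ℝ Set.univ g) (w : Euc d) :
    ConvexOn ℝ Set.univ (fun y : Euc d => g y + ⟪w, y⟫) := by
  refine hg.add ⟨convex_univ, fun x _ y _ a b _ _ _ => le_of_eq ?_⟩
  rw [smul_eq_mul, smul_eq_mul, inner_add_right, real_inner_smul_right,
    real_inner_smul_right]

/-- Bregman proximal three-point inequality. -/
lemma prox_ineq {d : ℕ} {X : Set (Euc d)} (hXcv : Convex ℝ X)
    {c : Euc d → ℝ} (hc : ConvexOn ℝ Set.univ c)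
    {ψ : Euc d → ℝ} {ψ' : Euc d → Euc d} (hψg : ∀ z, HasGradientAt ψ (ψ' z) z)
    {μ : ℝ} (hμ : 0 < μ) (xk : Euc d)
    {x1 : Euc d} (hx1 : x1 ∈ X)
    (hmin : ∀ x ∈ X, c x1 + μ * Breg ψ ψ' x1 xk ≤ c x + μ * Breg ψ ψ' x xk) :
    ∀ x ∈ X, c x1 + μ * Breg ψ ψ' x1 xk + μ * Breg ψ ψ' x x1 ≤ c x + μ * Breg ψ ψ' x xk := by
  intro x hx
  obtain ⟨v, hv⟩ : ∃ v : Euc d, v = x - x1 := ⟨_, rfl⟩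
  set q : ℝ → ℝ := fun t => μ * (ψ (x1 + t • v) - ψ x1 - t * ⟪ψ' xk, v⟫) with hqdef
  have hq : HasDerivAt q (μ * (⟪ψ' x1, v⟫ - ⟪ψ' xk, v⟫)) 0 := by
    have h1 := (hasDerivAt_line x1 v (hψg x1)).sub_const (ψ x1)
    have h2 : HasDerivAt (fun t : ℝ => t * ⟪ψ' xk, v⟫) (⟪ψ' xk, v⟫) 0 := by
      simpa using (hasDerivAt_id (0:ℝ)).mul_const (⟪ψ' xk, v⟫)
    exact ((h1.sub h2).const_mul μ)
  have h0 : q 0 = 0 := by simp [hqdef]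
  have hslope : ∀ t : ℝ, t ∈ Set.Ioc (0:ℝ) 1 → (c x1 - c x) * t ≤ q t := by
    intro t ht
    have hcomb : x1 + t • v = (1 - t) • x1 + t • x := by rw [hv]; module
    have hmem : x1 + t • v ∈ X := by
      rw [hcomb]
      exact hXcv hx1 hx (by linarith [ht.2]) (le_of_lt ht.1) (by ring)
    have hcvx := hc.2 (Set.mem_univ x1) (Set.mem_univ x) (by linarith [ht.2] : (0:ℝ) ≤ 1 - t)
      (le_of_lt ht.1) (by ring)
    simp only [smul_eq_mul] at hcvx
    rw [← hcomb] at hcvx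
    have hmin' := hmin _ hmem
    have hBdiff : Breg ψ ψ' (x1 + t • v) xk - Breg ψ ψ' x1 xk
        = ψ (x1 + t • v) - ψ x1 - t * ⟪ψ' xk, v⟫ := by
      simp only [Breg]
      have : ⟪ψ' xk, x1 + t • v - xk⟫ - ⟪ψ' xk, x1 - xk⟫ = t * ⟪ψ' xk, v⟫ := by
        rw [← inner_sub_right]
        have : x1 + t • v - xk - (x1 - xk) = t • v := by abel
        rw [this, real_inner_smul_right]
      linarith
    have hBdiff2 : μ * (Breg ψ ψ' (x1 + t • v) xk - Breg ψ ψ' x1 xk)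
        = μ * (ψ (x1 + t • v) - ψ x1 - t * ⟪ψ' xk, v⟫) := by rw [hBdiff]
    simp only [hqdef]
    linarith [hmin', hcvx, hBdiff2]
  have hkey : c x1 - c x ≤ μ * (⟪ψ' x1, v⟫ - ⟪ψ' xk, v⟫) := slope_le_of_deriv hq h0 hslope
  have hident : Breg ψ ψ' x xk - Breg ψ ψ' x1 xk - Breg ψ ψ' x x1
      = ⟪ψ' x1, v⟫ - ⟪ψ' xk, v⟫ := by
    simp only [Breg, hv, inner_sub_right]
    ring
  have hident2 : μ * (Breg ψ ψ' x xk - Breg ψ ψ' x1 xk - Breg ψ ψ' x x1)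
      = μ * (⟪ψ' x1, v⟫ - ⟪ψ' xk, v⟫) := by rw [hident]
  linarith [hkey, hident2]

set_option maxHeartbeats 1000000 in
/-- Fejér monotonicity of SPIDA with respect to the Bregman
distance to a saddle point. -/
theorem spida_fejer_monotone {n m : ℕ}
    (X : Set (Euc n)) (Y : Set (Euc m))
    (hXne : X.Nonempty) (hXcl : IsClosed X) (hXcv : Convex ℝ X)
    (hYne : Y.Nonempty) (hYcl : IsClosed Y) (hYcv : Convex ℝ Y)
    (f : Euc n → ℝ) (g : Euc m → ℝ)
    (hf : ConvexOn ℝ Set.univ f) (hflsc : LowerSemicontinuous f)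
    (hg : ConvexOn ℝ Set.univ g) (hglsc : LowerSemicontinuous g)
    (A : Euc n →L[ℝ] Euc m)
    (γ μ : ℝ) (hγ : 0 < γ) (hμ : 0 < μ)
    (φ : Euc m → ℝ) (φ' : Euc m → Euc m)
    (hφg : ∀ z, HasGradientAt φ (φ' z) z) (hφcv : ConvexOn ℝ Set.univ φ)
    (ψ : Euc n → ℝ) (ψ' : Euc n → Euc n)
    (hψg : ∀ z, HasGradientAt ψ (ψ' z) z) (hψcv : ConvexOn ℝ Set.univ ψ)
    (xk x1 : Euc n) (yk yt1 y1 : Euc m)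
    (hxk : xk ∈ X) (hyk : yk ∈ Y)
    (hyt1mem : yt1 ∈ Y)
    (hyt1max : ∀ y ∈ Y, -g y + ⟪A xk, y⟫ - γ * Breg φ φ' y yk ≤
      -g yt1 + ⟪A xk, yt1⟫ - γ * Breg φ φ' yt1 yk)
    (hx1mem : x1 ∈ X)
    (hx1min : ∀ x ∈ X, f x1 + ⟪A x1, yt1⟫ + μ * Breg ψ ψ' x1 xk ≤
      f x + ⟪A x, yt1⟫ + μ * Breg ψ ψ' x xk)
    (hy1mem : y1 ∈ Y)
    (hy1max : ∀ y ∈ Y, -g y + ⟪A x1, y⟫ - γ * Breg φ φ' y yk ≤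
      -g y1 + ⟪A x1, y1⟫ - γ * Breg φ φ' y1 yk)
    (ϱ α : ℝ) (hϱ : 0 < ϱ) (hα : 0 < α)
    (hφsc : ConvexOn ℝ Set.univ (fun z => φ z - ϱ / 2 * ‖z‖ ^ 2))
    (hαϱγ : 1 ≤ α * ϱ * γ)
    (φn : Euc n → ℝ) (φn' : Euc n → Euc n)
    (hφng : ∀ z, HasGradientAt φn (φn' z) z)
    (hφnsc : ConvexOn ℝ Set.univ (fun z => φn z - ϱ / 2 * ‖z‖ ^ 2))
    (L0 : ℝ) (hL0pos : 0 < L0)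
    (hL0le : L0 ≤ ϱ * μ / (α * ‖(ContinuousLinearMap.adjoint A).comp A‖))
    (hLψφ : ConvexOn ℝ Set.univ (fun z => L0 * ψ z - φn z))
    (xs : Euc n) (ys : Euc m) (hxs : xs ∈ X) (hys : ys ∈ Y)
    (hsaddle : ∀ xx ∈ X, ∀ yy ∈ Y,
      Lag f g A xs yy ≤ Lag f g A xs ys ∧ Lag f g A xs ys ≤ Lag f g A xx ys) :
    0 ≤ γ * Breg φ φ' ys y1 + μ * Breg ψ ψ' xs x1 ∧
      γ * Breg φ φ' ys y1 + μ * Breg ψ ψ' xs x1 ≤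
        γ * Breg φ φ' ys yk + μ * Breg ψ ψ' xs xk := by
  constructor
  · exact add_nonneg (mul_nonneg hγ.le (breg_nonneg hφg hφcv ys y1))
      (mul_nonneg hμ.le (breg_nonneg hψg hψcv xs x1))
  -- convexity of the partial objectives
  have hc1 : ConvexOn ℝ Set.univ (fun y : Euc m => g y - ⟪A xk, y⟫) := by
    have h := convexOn_add_inner hg (-(A xk))
    have e : (fun y : Euc m => g y + ⟪-(A xk), y⟫) = fun y : Euc m => g y - ⟪A xk, y⟫ := by
      funext y; rw [inner_neg_left]; ring
    rwa [e] at h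
  have hc3 : ConvexOn ℝ Set.univ (fun y : Euc m => g y - ⟪A x1, y⟫) := by
    have h := convexOn_add_inner hg (-(A x1))
    have e : (fun y : Euc m => g y + ⟪-(A x1), y⟫) = fun y : Euc m => g y - ⟪A x1, y⟫ := by
      funext y; rw [inner_neg_left]; ring
    rwa [e] at h
  have hc2 : ConvexOn ℝ Set.univ (fun x : Euc n => f x + ⟪A x, yt1⟫) := by
    have h := convexOn_add_inner hf ((ContinuousLinearMap.adjoint A) yt1)
    have e : (fun x : Euc n => f x + ⟪A x, yt1⟫)
        = fun x : Euc n => f x + ⟪(ContinuousLinearMap.adjoint A) yt1, x⟫ := by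
      funext x
      rw [ContinuousLinearMap.adjoint_inner_left, real_inner_comm]
    rw [e]; exact h
  -- three prox inequalities
  have P1 := prox_ineq hYcv hc1 hφg hγ yk hyt1mem
    (fun y hy => by linarith [hyt1max y hy])
  have P3 := prox_ineq hYcv hc3 hφg hγ yk hy1mem
    (fun y hy => by linarith [hy1max y hy])
  have P2 := prox_ineq hXcv hc2 hψg hμ xk hx1mem
    (fun x hx => by linarith [hx1min x hx])
  have hIII := P1 y1 hy1mem
  have hII := P3 ys hys
  have hI := P2 xs hxs
  -- saddle point inequality
  have hS : f xs + ⟪A xs, yt1⟫ - g yt1 ≤ f x1 + ⟪A x1, ys⟫ - g ys := by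
    have h := hsaddle x1 hx1mem yt1 hyt1mem
    simp only [Lag] at h
    linarith [h.1, h.2]
  -- strong convexity bounds
  have hBy : ϱ / 2 * ‖yt1 - y1‖ ^ 2 ≤ Breg φ φ' y1 yt1 := by
    rw [norm_sub_rev]
    exact breg_strong hφg hφsc y1 yt1
  have hψs : ConvexOn ℝ Set.univ (fun z : Euc n => ψ z - ϱ / (2 * L0) * ‖z‖ ^ 2) := by
    have hsum := hLψφ.add hφnsc
    have hsc := hsum.smul (le_of_lt (inv_pos.mpr hL0pos))
    have e : (fun z : Euc n => ψ z - ϱ / (2 * L0) * ‖z‖ ^ 2)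
        = fun z : Euc n => L0⁻¹ • ((L0 * ψ z - φn z) + (φn z - ϱ / 2 * ‖z‖ ^ 2)) := by
      funext z
      simp only [smul_eq_mul]
      field_simp
      ring
    rw [e]; exact hsc
  have hBx : ϱ / (2 * L0) * ‖x1 - xk‖ ^ 2 ≤ Breg ψ ψ' x1 xk := breg_strong hψg hψs x1 xk
  have hByk : 0 ≤ Breg φ φ' yt1 yk := breg_nonneg hφg hφcv yt1 yk
  -- spectral norm facts
  have hAsq : ‖A‖ ^ 2 * L0 ≤ ϱ * ϱ * μ * γ := by
    have hN := ContinuousLinearMap.norm_adjoint_comp_self A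
    rw [show ContinuousLinearMap.adjoint A ∘L A = (ContinuousLinearMap.adjoint A).comp A
      from rfl] at hN
    rcases eq_or_lt_of_le (norm_nonneg A) with h0 | hApos
    · have hA0 : ‖A‖ = 0 := h0.symm
      rw [hA0]
      have : (0:ℝ) < ϱ * ϱ * μ * γ := by positivity
      nlinarith [this]
    · have hpos : 0 < α * ‖(ContinuousLinearMap.adjoint A).comp A‖ := by
        rw [hN]; positivity
      have h1 : L0 * (α * ‖(ContinuousLinearMap.adjoint A).comp A‖) ≤ ϱ * μ :=
        (le_div_iff₀ hpos).mp hL0le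
      rw [hN] at h1
      have h2 : L0 * (α * (‖A‖ * ‖A‖)) * (ϱ * γ) ≤ ϱ * μ * (ϱ * γ) :=
        mul_le_mul_of_nonneg_right h1 (mul_pos hϱ hγ).le
      have h3 : ‖A‖ * ‖A‖ * L0 * 1 ≤ ‖A‖ * ‖A‖ * L0 * (α * ϱ * γ) :=
        mul_le_mul_of_nonneg_left hαϱγ
          (mul_nonneg (mul_nonneg (norm_nonneg A) (norm_nonneg A)) hL0pos.le)
      linarith [h2, h3]
  -- key Young-type inequality
  have ha : (0:ℝ) ≤ ‖x1 - xk‖ := norm_nonneg _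
  have hb : (0:ℝ) ≤ ‖yt1 - y1‖ := norm_nonneg _
  have F4 : ‖A‖ * (‖x1 - xk‖ * ‖yt1 - y1‖) ≤
      μ * (ϱ / (2 * L0) * ‖x1 - xk‖ ^ 2) + γ * (ϱ / 2 * ‖yt1 - y1‖ ^ 2) := by
    have h2L0 : (0:ℝ) < 2 * L0 := by linarith
    have e : μ * (ϱ / (2 * L0) * ‖x1 - xk‖ ^ 2) + γ * (ϱ / 2 * ‖yt1 - y1‖ ^ 2)
        = (μ * ϱ * ‖x1 - xk‖ ^ 2 + γ * ϱ * ‖yt1 - y1‖ ^ 2 * L0) / (2 * L0) := by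
      field_simp
    rw [e, le_div_iff₀ h2L0]
    nlinarith [hAsq, mul_nonneg hL0pos.le (sq_nonneg (‖A‖ * ‖x1 - xk‖ - ϱ * γ * ‖yt1 - y1‖)),
      mul_le_mul_of_nonneg_right hAsq (sq_nonneg ‖x1 - xk‖), mul_pos hϱ hγ,
      mul_nonneg (mul_nonneg (norm_nonneg A) ha) hb, sq_nonneg ‖x1 - xk‖,
      sq_nonneg ‖yt1 - y1‖, hL0pos, hϱ, hγ, hμ]
  -- inner product bound
  have F5 : -(‖A‖ * (‖x1 - xk‖ * ‖yt1 - y1‖)) ≤ ⟪A (x1 - xk), yt1 - y1⟫ := by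
    have h1 := abs_real_inner_le_norm (A (x1 - xk)) (yt1 - y1)
    have h2 := A.le_opNorm (x1 - xk)
    have h3 := mul_le_mul_of_nonneg_right h2 hb
    have h4 := neg_abs_le (⟪A (x1 - xk), yt1 - y1⟫)
    nlinarith [h1, h3, h4]
  have F6 : ⟪A (x1 - xk), yt1 - y1⟫
      = ⟪A x1, yt1⟫ - ⟪A x1, y1⟫ - ⟪A xk, yt1⟫ + ⟪A xk, y1⟫ := by
    simp only [map_sub, inner_sub_left, inner_sub_right]
    ring
  -- multiply strong convexity bounds
  have F1 : μ * (ϱ / (2 * L0) * ‖x1 - xk‖ ^ 2) ≤ μ * Breg ψ ψ' x1 xk :=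
    mul_le_mul_of_nonneg_left hBx hμ.le
  have F2 : γ * (ϱ / 2 * ‖yt1 - y1‖ ^ 2) ≤ γ * Breg φ φ' y1 yt1 :=
    mul_le_mul_of_nonneg_left hBy hγ.le
  have F3 : 0 ≤ γ * Breg φ φ' yt1 yk := mul_nonneg hγ.le hByk
  linarith [hI, hII, hIII, hS, F1, F2, F3, F4, F5, F6]
end
end
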